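/- Let y > 0, α ∈ [0, 2π), and K ∈ (0, 1). Then the sum of 1/p over all primes p satisfying cos(y·ln p + α) < −K diverges. -/

import Mathlib

open Real Filter Finset

noncomputable def pterm (p : Nat.Primes) (t σ : ℝ) : ℂ := (p : ℂ) ^ (-((σ : ℂ) + t * Complex.I))

noncomputable def Wline (t σ : ℝ) : ℂ := ∑' p : Nat.Primes, -Complex.log (1 - pterm p t σ)

noncomputable def Sline (t σ : ℝ) : ℂ := ∑' p : Nat.Primes, pterm p t σ

lemma p_cpow_eq (p : Nat.Primes) (w : ℂ) :
    (p : ℂ) ^ w = Complex.exp ((Real.log p : ℂ) * w) := by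
  have h0 : (p : ℂ) ≠ 0 := by exact_mod_cast p.prop.pos.ne'
  rw [Complex.cpow_def_of_ne_zero h0]
  congr 2
  have h1 : ((p : ℕ) : ℂ) = (((p : ℕ) : ℝ) : ℂ) := by push_cast; ring
  rw [h1, ← Complex.ofReal_log (by positivity)]

lemma norm_pterm (p : Nat.Primes) (t σ : ℝ) : ‖pterm p t σ‖ = (p : ℝ) ^ (-σ) := by
  rw [pterm, p_cpow_eq, Complex.norm_exp]
  have h : ((Real.log p : ℂ) * (-((σ : ℂ) + t * Complex.I))).re = Real.log p * (-σ) := by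
    rw [Complex.re_ofReal_mul]
    simp
  rw [h, Real.rpow_def_of_pos (by exact_mod_cast p.prop.pos)]

lemma summable_p_rpow {a : ℝ} (ha : 1 < a) :
    Summable (fun p : Nat.Primes => (p : ℝ) ^ (-a)) :=
  (Real.summable_nat_rpow.mpr (by linarith)).subtype _

lemma p_one_le (p : Nat.Primes) : (1 : ℝ) ≤ (p : ℕ) := by exact_mod_cast p.prop.one_lt.le

lemma p_two_le (p : Nat.Primes) : (2 : ℝ) ≤ (p : ℕ) := by exact_mod_cast p.prop.two_le

lemma rpow_anti (p : Nat.Primes) {a σ : ℝ} (h : a ≤ σ) : (p : ℝ) ^ (-σ) ≤ (p : ℝ) ^ (-a) :=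
  Real.rpow_le_rpow_of_exponent_le (p_one_le p) (by linarith)

lemma rpow_le_half (p : Nat.Primes) {a : ℝ} (h : 1 ≤ a) : (p : ℝ) ^ (-a) ≤ 1 / 2 := by
  calc (p : ℝ) ^ (-a) ≤ (p : ℝ) ^ (-1 : ℝ) := rpow_anti p h
  _ = ((p : ℕ) : ℝ)⁻¹ := Real.rpow_neg_one _
  _ ≤ 1 / 2 := by
      rw [one_div]
      exact inv_anti₀ (by norm_num) (p_two_le p)

lemma summable_pterm (t : ℝ) {σ : ℝ} (h : 1 < σ) :
    Summable (fun p : Nat.Primes => pterm p t σ) := by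
  apply Summable.of_norm
  simp only [norm_pterm]
  exact summable_p_rpow h

lemma norm_log_one_sub_le {z : ℂ} (hz : ‖z‖ ≤ 1 / 2) :
    ‖Complex.log (1 - z)‖ ≤ 3 / 2 * ‖z‖ := by
  have := Complex.norm_log_one_add_half_le_self (z := -z) (by simpa using hz)
  simpa [sub_eq_add_neg] using this

lemma summable_log_pterm (t : ℝ) {σ : ℝ} (h : 1 < σ) :
    Summable (fun p : Nat.Primes => -Complex.log (1 - pterm p t σ)) := by
  apply Summable.of_norm
  apply Summable.of_nonneg_of_le (fun p => norm_nonneg _)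
    (fun p => ?_) (((summable_p_rpow h).mul_left (3 / 2)))
  rw [norm_neg]
  calc ‖Complex.log (1 - pterm p t σ)‖ ≤ 3 / 2 * ‖pterm p t σ‖ :=
        norm_log_one_sub_le (by rw [norm_pterm]; exact rpow_le_half p h.le)
  _ = 3 / 2 * (p : ℝ) ^ (-σ) := by rw [norm_pterm]

lemma continuous_pterm (p : Nat.Primes) (t : ℝ) : Continuous (fun σ : ℝ => pterm p t σ) := by
  simp only [pterm, p_cpow_eq]
  exact Complex.continuous_exp.comp (by fun_prop)

lemma one_sub_pterm_mem {p : Nat.Primes} {t σ : ℝ} (h : 1 ≤ σ) :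
    1 - pterm p t σ ∈ Complex.slitPlane := by
  rw [Complex.mem_slitPlane_iff]
  left
  have h1 : ‖pterm p t σ‖ ≤ 1 / 2 := by
    rw [norm_pterm]; exact rpow_le_half p h
  have h2 : (pterm p t σ).re ≤ 1 / 2 := le_trans (Complex.re_le_norm _) h1
  simp only [Complex.sub_re, Complex.one_re]
  linarith

lemma continuousAt_Wline (t : ℝ) {σ₀ : ℝ} (h : 1 < σ₀) :
    ContinuousAt (Wline t) σ₀ := by
  set a : ℝ := (1 + σ₀) / 2 with ha
  have ha1 : 1 < a := by simp only [ha]; linarith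
  have haσ : a < σ₀ := by simp only [ha]; linarith
  have hcont : ContinuousOn (fun σ : ℝ => ∑' p : Nat.Primes,
      -Complex.log (1 - pterm p t σ)) (Set.Ici a) := by
    apply continuousOn_tsum (u := fun p : Nat.Primes => 3 / 2 * (p : ℝ) ^ (-a))
    · intro p
      intro σ hσ
      have hσa : 1 ≤ σ := le_trans ha1.le hσ
      apply ContinuousAt.continuousWithinAt
      apply ContinuousAt.neg
      have hin : ContinuousAt (fun σ : ℝ => 1 - pterm p t σ) σ :=
        continuousAt_const.sub (continuous_pterm p t).continuousAt
      exact ContinuousAt.comp (g := Complex.log)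
        (f := fun σ : ℝ => 1 - pterm p t σ) (continuousAt_clog (one_sub_pterm_mem hσa)) hin
    · exact (summable_p_rpow ha1).mul_left _
    · intro p σ hσ
      rw [norm_neg]
      calc ‖Complex.log (1 - pterm p t σ)‖ ≤ 3 / 2 * ‖pterm p t σ‖ :=
            norm_log_one_sub_le (by rw [norm_pterm]; exact rpow_le_half p (le_trans ha1.le hσ))
      _ ≤ 3 / 2 * (p : ℝ) ^ (-a) := by
            rw [norm_pterm]
            exact mul_le_mul_of_nonneg_left (rpow_anti p hσ) (by norm_num)
  have : ContinuousOn (Wline t) (Set.Ici a) := hcont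
  exact this.continuousAt (Ici_mem_nhds haσ)

lemma exp_Wline (t : ℝ) {σ : ℝ} (h : 1 < σ) :
    Complex.exp (Wline t σ) = riemannZeta ((σ : ℂ) + t * Complex.I) := by
  have hre : 1 < ((σ : ℂ) + t * Complex.I).re := by simp [h]
  have := riemannZeta_eulerProduct_exp_log hre
  rw [← this]
  rfl

lemma zeta_cont {t : ℝ} (ht : t ≠ 0) :
    Continuous (fun σ : ℝ => riemannZeta ((σ : ℂ) + t * Complex.I)) := by
  rw [continuous_iff_continuousAt]
  intro σ
  have h1 : ((σ : ℂ) + t * Complex.I) ≠ 1 := by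
    intro hc
    apply ht
    have := congrArg Complex.im hc
    simpa using this
  have hl : Continuous (fun σ : ℝ => (σ : ℂ) + t * Complex.I) :=
    Complex.continuous_ofReal.add continuous_const
  exact ContinuousAt.comp ((differentiableAt_riemannZeta h1).continuousAt) hl.continuousAt

lemma Wline_bound {t : ℝ} (ht : t ≠ 0) : ∃ C, ∀ σ ∈ Set.Ioc (1:ℝ) 2, ‖Wline t σ‖ ≤ C := by
  set g : ℝ → ℂ := fun σ => riemannZeta ((σ : ℂ) + t * Complex.I) with hgdef
  have hg : Continuous g := zeta_cont ht
  have hgne : ∀ σ : ℝ, 1 ≤ σ → g σ ≠ 0 := fun σ hσ =>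
    riemannZeta_ne_zero_of_one_le_re (by simp [hσ])
  set z₀ : ℂ := g 1 with hz₀def
  have hz₀ : z₀ ≠ 0 := hgne 1 le_rfl
  have hz₀n : 0 < ‖z₀‖ := norm_pos_iff.mpr hz₀
  -- choose δ
  obtain ⟨δ, hδpos, hδ⟩ := Metric.continuousAt_iff.mp hg.continuousAt (‖z₀‖ / 2) (by positivity)
  set δ' : ℝ := min (δ / 2) 1 with hδ'def
  have hδ'pos : 0 < δ' := by positivity
  have hδ'le1 : δ' ≤ 1 := min_le_right _ _
  have hclose : ∀ σ ∈ Set.Icc (1:ℝ) (1 + δ'), ‖g σ / z₀ - 1‖ ≤ 1 / 2 := by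
    intro σ hσ
    have hd : dist σ 1 < δ := by
      rw [Real.dist_eq, abs_of_nonneg (by linarith [hσ.1])]
      have := hσ.2
      have h2 : δ' ≤ δ / 2 := min_le_left _ _
      linarith
    have := hδ hd
    rw [dist_eq_norm] at this
    have heq : g σ / z₀ - 1 = (g σ - z₀) / z₀ := by field_simp
    rw [heq, norm_div]
    rw [div_le_div_iff₀ (by positivity) (by norm_num)]
    calc ‖g σ - z₀‖ * 2 ≤ (‖z₀‖ / 2) * 2 := by nlinarith [this]
    _ = 1 * ‖z₀‖ := by ring
  have hslit : ∀ σ ∈ Set.Icc (1:ℝ) (1 + δ'), g σ / z₀ ∈ Complex.slitPlane := by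
    intro σ hσ
    rw [Complex.mem_slitPlane_iff]
    left
    have h1 := hclose σ hσ
    have h2 : (g σ / z₀ - 1).re ≤ ‖g σ / z₀ - 1‖ := Complex.re_le_norm _
    have h3 : (g σ / z₀ - 1).re = (g σ / z₀).re - 1 := by simp
    have h4 : |(g σ / z₀ - 1).re| ≤ 1 / 2 :=
      le_trans (Complex.abs_re_le_norm _) h1
    have h5 := abs_le.mp h4
    linarith [h5.1]
  set F : ℝ → ℂ := fun σ => Wline t σ - Complex.log (g σ / z₀) with hFdef
  have hexpF : ∀ σ ∈ Set.Ioc (1:ℝ) (1 + δ'), Complex.exp (F σ) = z₀ := by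
    intro σ hσ
    have h1 : 1 < σ := hσ.1
    have hne : g σ / z₀ ≠ 0 := div_ne_zero (hgne σ h1.le) hz₀
    rw [hFdef]
    simp only
    rw [Complex.exp_sub, exp_Wline t h1, Complex.exp_log hne]
    show g σ / (g σ / z₀) = z₀
    rw [div_div_eq_mul_div, mul_comm, mul_div_assoc, div_self (hgne σ h1.le), mul_one]
  have hFcont : ContinuousOn F (Set.Ioc (1:ℝ) (1 + δ')) := by
    intro σ hσ
    have h1 : 1 < σ := hσ.1
    apply ContinuousWithinAt.sub
    · exact (continuousAt_Wline t h1).continuousWithinAt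
    · have hin : ContinuousAt (fun σ : ℝ => g σ / z₀) σ := (hg.continuousAt).div_const _
      exact (ContinuousAt.comp (g := Complex.log) (f := fun σ : ℝ => g σ / z₀)
        (continuousAt_clog (hslit σ ⟨h1.le, hσ.2⟩)) hin).continuousWithinAt
  set σ₁ : ℝ := 1 + δ' with hσ₁def
  have hσ₁mem : σ₁ ∈ Set.Ioc (1:ℝ) (1 + δ') := ⟨by simp only [hσ₁def]; linarith, le_rfl⟩
  have hdecomp : ∀ σ ∈ Set.Ioc (1:ℝ) (1 + δ'), ∃ n : ℤ,
      F σ = F σ₁ + n * (2 * π * Complex.I) := by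
    intro σ hσ
    exact Complex.exp_eq_exp_iff_exists_int.mp ((hexpF σ hσ).trans (hexpF σ₁ hσ₁mem).symm)
  set q : ℝ → ℝ := fun σ => (F σ - F σ₁).im with hqdef
  have hqcont : ContinuousOn q (Set.Ioc (1:ℝ) (1 + δ')) :=
    Complex.continuous_im.comp_continuousOn (hFcont.sub continuousOn_const)
  have him0 : ∀ (σ : ℝ) (n : ℤ), F σ = F σ₁ + n * (2 * π * Complex.I) →
      q σ = (n : ℝ) * (2 * π) := by
    intro σ n hn
    show (F σ - F σ₁).im = _
    rw [hn]
    simp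
  have hqmaps : Set.MapsTo q (Set.Ioc (1:ℝ) (1 + δ'))
      ((AddSubgroup.zmultiples (2 * π) : AddSubgroup ℝ) : Set ℝ) := by
    intro σ hσ
    obtain ⟨n, hn⟩ := hdecomp σ hσ
    rw [him0 σ n hn, ← zsmul_eq_mul]
    exact AddSubgroup.zsmul_mem _ (AddSubgroup.mem_zmultiples _) n
  haveI : DiscreteTopology ((AddSubgroup.zmultiples (2 * π) : AddSubgroup ℝ) : Set ℝ) :=
    inferInstanceAs (DiscreteTopology (AddSubgroup.zmultiples (2 * π)))
  have hFconst : ∀ σ ∈ Set.Ioc (1:ℝ) (1 + δ'), F σ = F σ₁ := by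
    intro σ hσ
    have hq : q σ = q σ₁ :=
      IsPreconnected.constant_of_mapsTo isPreconnected_Ioc (isDiscrete_iff_discreteTopology.mpr inferInstance) hqcont hqmaps hσ hσ₁mem
    have hq1 : q σ₁ = 0 := by simp [hqdef]
    obtain ⟨n, hn⟩ := hdecomp σ hσ
    have him : ((n : ℝ) * (2 * π)) = 0 := by
      have := him0 σ n hn
      rw [hq, hq1] at this
      linarith [this]
    have hn0 : (n : ℝ) = 0 := by
      rcases mul_eq_zero.mp him with h | h
      · exact h
      · exfalso; have := Real.pi_ne_zero; simp at h
    have : (n : ℂ) = 0 := by exact_mod_cast hn0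
    rw [hn, this]
    ring
  have hbound1 : ∀ σ ∈ Set.Ioc (1:ℝ) (1 + δ'), ‖Wline t σ‖ ≤ ‖F σ₁‖ + 3 / 4 := by
    intro σ hσ
    have hW : Wline t σ = F σ + Complex.log (g σ / z₀) := by simp [hFdef]
    rw [hW, hFconst σ hσ]
    apply le_trans (norm_add_le _ _)
    have hlog : ‖Complex.log (g σ / z₀)‖ ≤ 3 / 4 := by
      rw [show g σ / z₀ = 1 + (g σ / z₀ - 1) by ring]
      calc ‖Complex.log (1 + (g σ / z₀ - 1))‖ ≤ 3 / 2 * ‖g σ / z₀ - 1‖ :=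
            Complex.norm_log_one_add_half_le_self (hclose σ ⟨hσ.1.le, hσ.2⟩)
      _ ≤ 3 / 2 * (1 / 2) := by
            have := hclose σ ⟨hσ.1.le, hσ.2⟩
            nlinarith [this]
      _ = 3 / 4 := by norm_num
    linarith
  have hWcont2 : ContinuousOn (Wline t) (Set.Icc σ₁ 2) := by
    intro σ hσ
    have : 1 < σ := lt_of_lt_of_le (by simp only [hσ₁def]; linarith) hσ.1
    exact (continuousAt_Wline t this).continuousWithinAt
  obtain ⟨C₂, hC₂⟩ := (isCompact_Icc (a := σ₁) (b := 2)).exists_bound_of_continuousOn hWcont2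
  refine ⟨max (‖F σ₁‖ + 3 / 4) C₂, fun σ hσ => ?_⟩
  rcases le_total σ σ₁ with hc | hc
  · exact le_trans (hbound1 σ ⟨hσ.1, hc⟩) (le_max_left _ _)
  · exact le_trans (hC₂ σ ⟨hc, hσ.2⟩) (le_max_right _ _)

lemma summable_err (t : ℝ) {σ : ℝ} (h : 1 < σ) :
    Summable (fun p : Nat.Primes => pterm p t σ + Complex.log (1 - pterm p t σ)) :=
  (summable_pterm t h).add (by simpa using (summable_log_pterm t h).neg)

lemma err_bound (t : ℝ) {σ : ℝ} (h : 1 < σ) (p : Nat.Primes) :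
    ‖pterm p t σ + Complex.log (1 - pterm p t σ)‖ ≤ (p : ℝ) ^ (-2 : ℝ) := by
  have hz : ‖pterm p t σ‖ ≤ 1 / 2 := by rw [norm_pterm]; exact rpow_le_half p h.le
  have hz1 : ‖(-(pterm p t σ) : ℂ)‖ < 1 := by rw [norm_neg]; linarith
  have key := Complex.norm_log_one_add_sub_self_le hz1
  rw [norm_neg] at key
  have h2 : ‖Complex.log (1 - pterm p t σ) + pterm p t σ‖ ≤ ‖pterm p t σ‖ ^ 2 := by
    have e1 : Complex.log (1 + -pterm p t σ) - -pterm p t σ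
        = Complex.log (1 - pterm p t σ) + pterm p t σ := by ring_nf
    rw [e1] at key
    apply le_trans key
    have h3 : (1 - ‖pterm p t σ‖)⁻¹ ≤ 2 := by
      rw [inv_le_comm₀ (by linarith) (by norm_num)]
      linarith
    calc ‖pterm p t σ‖ ^ 2 * (1 - ‖pterm p t σ‖)⁻¹ / 2 ≤ ‖pterm p t σ‖ ^ 2 * 2 / 2 := by
          nlinarith [sq_nonneg ‖pterm p t σ‖, norm_nonneg (pterm p t σ),
            inv_nonneg.mpr (show (0:ℝ) ≤ 1 - ‖pterm p t σ‖ by linarith)]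
    _ = ‖pterm p t σ‖ ^ 2 := by ring
  calc ‖pterm p t σ + Complex.log (1 - pterm p t σ)‖
      = ‖Complex.log (1 - pterm p t σ) + pterm p t σ‖ := by rw [add_comm]
  _ ≤ ‖pterm p t σ‖ ^ 2 := h2
  _ ≤ (p : ℝ) ^ (-2 : ℝ) := by
      rw [norm_pterm, ← Real.rpow_natCast ((p:ℝ) ^ (-σ)) 2, ← Real.rpow_mul (by positivity)]
      apply Real.rpow_le_rpow_of_exponent_le (p_one_le p)
      push_cast
      linarith

lemma Sline_bound {t : ℝ} (ht : t ≠ 0) : ∃ C, ∀ σ ∈ Set.Ioc (1:ℝ) 2, ‖Sline t σ‖ ≤ C := by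
  obtain ⟨C, hC⟩ := Wline_bound ht
  refine ⟨C + ∑' p : Nat.Primes, (p : ℝ) ^ (-2 : ℝ), fun σ hσ => ?_⟩
  have h1 : 1 < σ := hσ.1
  have hsplit : Sline t σ = Wline t σ
      + ∑' p : Nat.Primes, (pterm p t σ + Complex.log (1 - pterm p t σ)) := by
    rw [Wline, Sline, ← (summable_log_pterm t h1).tsum_add (summable_err t h1)]
    congr 1
    funext p
    ring
  rw [hsplit]
  apply le_trans (norm_add_le _ _)
  have h2 : ‖∑' p : Nat.Primes, (pterm p t σ + Complex.log (1 - pterm p t σ))‖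
      ≤ ∑' p : Nat.Primes, (p : ℝ) ^ (-2 : ℝ) := by
    apply tsum_of_norm_bounded (g := fun p : Nat.Primes => (p : ℝ) ^ (-2 : ℝ))
    · exact (summable_p_rpow (by norm_num)).hasSum
    · exact err_bound t h1
  exact add_le_add (hC σ hσ) h2

noncomputable def Rsum (σ : ℝ) : ℝ := ∑' p : Nat.Primes, (p : ℝ) ^ (-σ)

lemma Rsum_unbounded (D : ℝ) : ∃ σ ∈ Set.Ioc (1:ℝ) 2, D < Rsum σ := by
  have h1 : ∃ F : Finset Nat.Primes, D + 1 < ∑ p ∈ F, (1 / (p : ℝ)) := by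
    by_contra hcon
    push_neg at hcon
    exact Nat.Primes.not_summable_one_div
      (summable_of_sum_le (fun p => by positivity) hcon)
  obtain ⟨F, hF⟩ := h1
  have hcont : Continuous (fun σ : ℝ => ∑ p ∈ F, (p : ℝ) ^ (-σ)) := by
    apply continuous_finset_sum
    intro p _
    have hp : (0:ℝ) < (p : ℕ) := by exact_mod_cast p.prop.pos
    have hrw : ∀ σ : ℝ, (p : ℝ) ^ (-σ) = Real.exp (Real.log p * (-σ)) := fun σ =>
      Real.rpow_def_of_pos hp _
    simp only [hrw]
    fun_prop
  obtain ⟨δ, hδpos, hδ⟩ := Metric.continuousAt_iff.mp hcont.continuousAt 1 (by norm_num)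
  have hmin : 0 < min (δ / 2) (1 / 2) := by positivity
  set σ : ℝ := 1 + min (δ / 2) (1 / 2) with hσdef
  have hσ1 : 1 < σ := by simp only [hσdef]; linarith
  have hσ2 : σ ≤ 2 := by
    have : min (δ / 2) (1 / 2) ≤ 1 / 2 := min_le_right _ _
    simp only [hσdef]; linarith
  refine ⟨σ, ⟨hσ1, hσ2⟩, ?_⟩
  have hd : dist σ 1 < δ := by
    rw [Real.dist_eq, abs_of_nonneg (by simp only [hσdef]; linarith)]
    have h2 : min (δ / 2) (1 / 2) ≤ δ / 2 := min_le_left _ _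
    simp only [hσdef]
    linarith
  have hkey := hδ hd
  rw [Real.dist_eq] at hkey
  have hev : ∑ p ∈ F, (p : ℝ) ^ (-(1:ℝ)) = ∑ p ∈ F, (1 / (p : ℝ)) := by
    apply Finset.sum_congr rfl
    intro p _
    rw [Real.rpow_neg_one, one_div]
  rw [hev] at hkey
  have habs := (abs_le.mp hkey.le).1
  have hge : D < ∑ p ∈ F, (p : ℝ) ^ (-σ) := by linarith
  exact lt_of_lt_of_le hge (Summable.sum_le_tsum F (fun p _ => by positivity) (summable_p_rpow hσ1))

noncomputable def Efun (θ : ℝ) (k : ℤ) : ℂ := Complex.exp ((k : ℂ) * θ * Complex.I)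

lemma Efun_add (θ : ℝ) (k l : ℤ) : Efun θ (k + l) = Efun θ k * Efun θ l := by
  rw [Efun, Efun, Efun, ← Complex.exp_add]
  congr 1
  push_cast
  ring

lemma Efun_zero (θ : ℝ) : Efun θ 0 = 1 := by simp [Efun]

lemma Efun_norm (θ : ℝ) (k : ℤ) : ‖Efun θ k‖ = 1 := by
  rw [Efun, Complex.norm_exp]
  have : ((k : ℂ) * θ * Complex.I).re = 0 := by
    simp [Complex.mul_re, Complex.mul_im]
  rw [this, Real.exp_zero]

lemma Efun_conj (θ : ℝ) (k : ℤ) : (starRingEnd ℂ) (Efun θ k) = Efun θ (-k) := by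
  rw [Efun, Efun, ← Complex.exp_conj]
  congr 1
  simp only [map_mul, Complex.conj_I, Complex.conj_ofReal, map_intCast]
  push_cast
  ring

lemma cos_eq_Efun (θ : ℝ) : ((Real.cos θ : ℝ) : ℂ) = (Efun θ 1 + Efun θ (-1)) / 2 := by
  rw [Complex.ofReal_cos, Complex.cos]
  congr 2 <;> · rw [Efun]; congr 1; push_cast; ring

noncomputable def dsum (N : ℕ) (θ : ℝ) : ℂ := ∑ j ∈ Finset.range N, (-1 : ℂ) ^ j * Efun θ j

lemma dsum_norm_le (N : ℕ) (θ : ℝ) : ‖dsum N θ‖ ≤ N := by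
  have h : ∑ j ∈ Finset.range N, ‖(-1 : ℂ) ^ j * Efun θ j‖ = N := by
    rw [Finset.sum_congr rfl (fun j _ => by
      rw [norm_mul, norm_pow, norm_neg, norm_one, one_pow, Efun_norm, mul_one] :
      ∀ j ∈ Finset.range N, ‖(-1 : ℂ) ^ j * Efun θ j‖ = 1)]
    simp
  calc ‖dsum N θ‖ ≤ ∑ j ∈ Finset.range N, ‖(-1 : ℂ) ^ j * Efun θ j‖ := norm_sum_le _ _
  _ = N := h

lemma point_id (N : ℕ) (K θ : ℝ) :
    ((Real.cos θ + K : ℝ) : ℂ) * Complex.normSq (dsum N θ) =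
    ∑ j ∈ Finset.range N, ∑ m ∈ Finset.range N, (-1 : ℂ) ^ (j + m) *
      ((Efun θ ((j : ℤ) - m + 1) + Efun θ ((j : ℤ) - m - 1)) / 2
        + (K : ℂ) * Efun θ ((j : ℤ) - m)) := by
  have hconj : (starRingEnd ℂ) (dsum N θ)
      = ∑ m ∈ Finset.range N, (-1 : ℂ) ^ m * Efun θ (-m) := by
    rw [dsum, map_sum]
    apply Finset.sum_congr rfl
    intro m _
    rw [map_mul, Efun_conj, map_pow, map_neg, map_one]
  have hsq : ((Complex.normSq (dsum N θ) : ℝ) : ℂ) = dsum N θ * (starRingEnd ℂ) (dsum N θ) :=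
    (Complex.mul_conj _).symm
  have expand : dsum N θ * (starRingEnd ℂ) (dsum N θ)
      = ∑ j ∈ Finset.range N, ∑ m ∈ Finset.range N,
          (-1 : ℂ) ^ (j + m) * Efun θ ((j : ℤ) - m) := by
    rw [hconj, dsum, Finset.sum_mul_sum]
    apply Finset.sum_congr rfl
    intro j _
    apply Finset.sum_congr rfl
    intro m _
    have hEE : Efun θ (j : ℤ) * Efun θ (-(m : ℤ)) = Efun θ ((j : ℤ) - m) := by
      rw [← Efun_add]; congr 1
    rw [pow_add, ← hEE]
    ring
  calc ((Real.cos θ + K : ℝ) : ℂ) * Complex.normSq (dsum N θ)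
      = (((Real.cos θ : ℝ) : ℂ) + (K : ℂ)) * (dsum N θ * (starRingEnd ℂ) (dsum N θ)) := by
        rw [← hsq]; push_cast; ring
  _ = ∑ j ∈ Finset.range N, ∑ m ∈ Finset.range N,
        (((Real.cos θ : ℝ) : ℂ) + (K : ℂ)) * ((-1 : ℂ) ^ (j + m) * Efun θ ((j : ℤ) - m)) := by
        rw [expand, Finset.mul_sum]
        apply Finset.sum_congr rfl
        intro j _
        rw [Finset.mul_sum]
  _ = ∑ j ∈ Finset.range N, ∑ m ∈ Finset.range N, (-1 : ℂ) ^ (j + m) *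
      ((Efun θ ((j : ℤ) - m + 1) + Efun θ ((j : ℤ) - m - 1)) / 2
        + (K : ℂ) * Efun θ ((j : ℤ) - m)) := by
        apply Finset.sum_congr rfl
        intro j _
        apply Finset.sum_congr rfl
        intro m _
        have e1 : Efun θ ((j : ℤ) - m + 1) = Efun θ ((j : ℤ) - m) * Efun θ 1 := by
          rw [← Efun_add]
        have e2 : Efun θ ((j : ℤ) - m - 1) = Efun θ ((j : ℤ) - m) * Efun θ (-1) := by
          rw [← Efun_add]; congr 1
        rw [cos_eq_Efun, e1, e2]
        ring

lemma count0 (N : ℕ) : ∑ j ∈ Finset.range N, ∑ m ∈ Finset.range N,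
    (-1 : ℂ) ^ (j + m) * (if (j : ℤ) - m = 0 then (1 : ℂ) else 0) = N := by
  have hinner : ∀ j ∈ Finset.range N, (∑ m ∈ Finset.range N,
      (-1 : ℂ) ^ (j + m) * (if (j : ℤ) - m = 0 then (1 : ℂ) else 0)) = 1 := by
    intro j hj
    have hterm : ∀ m ∈ Finset.range N, (-1 : ℂ) ^ (j + m) * (if (j : ℤ) - m = 0 then (1 : ℂ) else 0)
        = if m = j then (-1 : ℂ) ^ (j + m) else 0 := by
      intro m _
      rw [mul_ite, mul_one, mul_zero]
      exact if_congr (by omega) rfl rfl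
    rw [Finset.sum_congr rfl hterm, Finset.sum_ite_eq' (Finset.range N) j
      (fun m => (-1 : ℂ) ^ (j + m)), if_pos hj]
    exact Even.neg_one_pow ⟨j, by ring⟩
  rw [Finset.sum_congr rfl hinner]
  simp

lemma count1 (N : ℕ) : ∑ j ∈ Finset.range N, ∑ m ∈ Finset.range N,
    (-1 : ℂ) ^ (j + m) * (if (j : ℤ) - m + 1 = 0 then (1 : ℂ) else 0) = -((N - 1 : ℕ) : ℂ) := by
  have hinner : ∀ j ∈ Finset.range N, (∑ m ∈ Finset.range N,
      (-1 : ℂ) ^ (j + m) * (if (j : ℤ) - m + 1 = 0 then (1 : ℂ) else 0))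
      = if j ∈ Finset.range (N - 1) then (-1 : ℂ) else 0 := by
    intro j hj
    have hterm : ∀ m ∈ Finset.range N,
        (-1 : ℂ) ^ (j + m) * (if (j : ℤ) - m + 1 = 0 then (1 : ℂ) else 0)
        = if m = j + 1 then (-1 : ℂ) ^ (j + m) else 0 := by
      intro m _
      rw [mul_ite, mul_one, mul_zero]
      exact if_congr (by omega) rfl rfl
    rw [Finset.sum_congr rfl hterm, Finset.sum_ite_eq' (Finset.range N) (j + 1)
      (fun m => (-1 : ℂ) ^ (j + m))]
    exact if_congr (by simp only [Finset.mem_range]; omega)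
      (Odd.neg_one_pow ⟨j, by ring⟩) rfl
  rw [Finset.sum_congr rfl hinner, Finset.sum_ite_mem,
    (by ext x; simp : Finset.range N ∩ Finset.range (N - 1) = Finset.range (N - 1)),
    Finset.sum_const, Finset.card_range]
  simp

lemma count2 (N : ℕ) : ∑ j ∈ Finset.range N, ∑ m ∈ Finset.range N,
    (-1 : ℂ) ^ (j + m) * (if (j : ℤ) - m - 1 = 0 then (1 : ℂ) else 0) = -((N - 1 : ℕ) : ℂ) := by
  rw [Finset.sum_comm]
  have hinner : ∀ m ∈ Finset.range N, (∑ j ∈ Finset.range N,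
      (-1 : ℂ) ^ (j + m) * (if (j : ℤ) - m - 1 = 0 then (1 : ℂ) else 0))
      = if m ∈ Finset.range (N - 1) then (-1 : ℂ) else 0 := by
    intro m hm
    have hterm : ∀ j ∈ Finset.range N,
        (-1 : ℂ) ^ (j + m) * (if (j : ℤ) - m - 1 = 0 then (1 : ℂ) else 0)
        = if j = m + 1 then (-1 : ℂ) ^ (j + m) else 0 := by
      intro j _
      rw [mul_ite, mul_one, mul_zero]
      exact if_congr (by omega) rfl rfl
    rw [Finset.sum_congr rfl hterm, Finset.sum_ite_eq' (Finset.range N) (m + 1)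
      (fun j => (-1 : ℂ) ^ (j + m))]
    exact if_congr (by simp only [Finset.mem_range]; omega)
      (Odd.neg_one_pow ⟨m, by ring⟩) rfl
  rw [Finset.sum_congr rfl hinner, Finset.sum_ite_mem,
    (by ext x; simp : Finset.range N ∩ Finset.range (N - 1) = Finset.range (N - 1)),
    Finset.sum_const, Finset.card_range]
  simp

noncomputable def Afun (y α : ℝ) (k : ℤ) (σ : ℝ) : ℂ :=
  ∑' p : Nat.Primes, Efun (y * Real.log p + α) k * (((p : ℝ) ^ (-σ) : ℝ) : ℂ)

lemma norm_Afun_term (y α : ℝ) (k : ℤ) (σ : ℝ) {p : Nat.Primes} (hσ : 0 < σ) :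
    ‖Efun (y * Real.log p + α) k * (((p : ℝ) ^ (-σ) : ℝ) : ℂ)‖ = (p : ℝ) ^ (-σ) := by
  rw [norm_mul, Efun_norm, one_mul, Complex.norm_real, Real.norm_eq_abs,
    abs_of_nonneg (by positivity)]

lemma summable_Afun (y α : ℝ) (k : ℤ) {σ : ℝ} (h : 1 < σ) :
    Summable (fun p : Nat.Primes => Efun (y * Real.log p + α) k * (((p : ℝ) ^ (-σ) : ℝ) : ℂ)) := by
  apply Summable.of_norm
  have : ∀ p : Nat.Primes, ‖Efun (y * Real.log p + α) k * (((p : ℝ) ^ (-σ) : ℝ) : ℂ)‖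
      = (p : ℝ) ^ (-σ) := fun p => norm_Afun_term y α k σ (by linarith)
  simp only [this]
  exact summable_p_rpow h

lemma Afun_zero_eq (y α : ℝ) (σ : ℝ) : Afun y α 0 σ = ((Rsum σ : ℝ) : ℂ) := by
  rw [Afun, Rsum, Complex.ofReal_tsum]
  apply tsum_congr
  intro p
  rw [Efun_zero, one_mul]

lemma Afun_pointwise (y α : ℝ) (k : ℤ) (σ : ℝ) (p : Nat.Primes) :
    Efun (y * Real.log p + α) k * (((p : ℝ) ^ (-σ) : ℝ) : ℂ)
    = Complex.exp ((k : ℂ) * α * Complex.I) * pterm p (-(k * y)) σ := by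
  have hp : (0:ℝ) < (p : ℕ) := by exact_mod_cast p.prop.pos
  rw [Efun, pterm, p_cpow_eq, Real.rpow_def_of_pos hp, Complex.ofReal_exp,
    ← Complex.exp_add, ← Complex.exp_add]
  congr 1
  push_cast
  ring

lemma Afun_bound {y : ℝ} (hy : 0 < y) (α : ℝ) {k : ℤ} (hk : k ≠ 0) :
    ∃ C, ∀ σ ∈ Set.Ioc (1:ℝ) 2, ‖Afun y α k σ‖ ≤ C := by
  have ht : -(k * y : ℝ) ≠ 0 := by
    simp only [neg_ne_zero]
    apply mul_ne_zero _ hy.ne'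
    exact_mod_cast hk
  obtain ⟨C, hC⟩ := Sline_bound ht
  refine ⟨C, fun σ hσ => ?_⟩
  have heq : Afun y α k σ = Complex.exp ((k : ℂ) * α * Complex.I) * Sline (-(k * y)) σ := by
    rw [Afun, Sline, ← tsum_mul_left]
    exact tsum_congr (fun p => Afun_pointwise y α k σ p)
  rw [heq, norm_mul]
  have : ‖Complex.exp ((k : ℂ) * α * Complex.I)‖ = 1 := by
    rw [Complex.norm_exp]
    have : ((k : ℂ) * α * Complex.I).re = 0 := by simp [Complex.mul_re, Complex.mul_im]
    rw [this, Real.exp_zero]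
  rw [this, one_mul]
  exact hC σ hσ

theorem stmt_5 (y α K : ℝ) (hy : 0 < y) (hα0 : 0 ≤ α) (hα2 : α < 2 * π)
    (hK0 : 0 < K) (hK1 : K < 1) :
    ¬ Summable (fun p : {p : ℕ // p.Prime ∧ Real.cos (y * Real.log p + α) < -K} =>
      (1 : ℝ) / p) := by
  intro hsum
  obtain ⟨N, hNgt⟩ := exists_nat_gt (1 / (1 - K))
  have h1K : 0 < 1 - K := by linarith
  have hNK : 1 < (N : ℝ) * (1 - K) := (div_lt_iff₀ h1K).mp hNgt
  have hNR : 0 < (N : ℝ) := by nlinarith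
  have hN1 : 1 ≤ N := Nat.cast_pos.mp hNR
  set θ : Nat.Primes → ℝ := fun p => y * Real.log p + α with hθdef
  set G : Nat.Primes → ℝ :=
    fun p => (Real.cos (θ p) + K) * Complex.normSq (dsum N (θ p)) with hGdef
  have hnormSq_le : ∀ p : Nat.Primes, Complex.normSq (dsum N (θ p)) ≤ (N : ℝ) ^ 2 := by
    intro p
    rw [Complex.normSq_eq_norm_sq]
    have := dsum_norm_le N (θ p)
    nlinarith [norm_nonneg (dsum N (θ p))]
  have hGabs : ∀ p : Nat.Primes, |G p| ≤ (1 + K) * (N : ℝ) ^ 2 := by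
    intro p
    rw [hGdef]
    simp only
    rw [abs_mul, abs_of_nonneg (Complex.normSq_nonneg _)]
    apply mul_le_mul _ (hnormSq_le p) (Complex.normSq_nonneg _) (by linarith)
    have h1 := Real.abs_cos_le_one (θ p)
    have h2 := abs_le.mp h1
    rw [abs_le]
    constructor <;> nlinarith [h2.1, h2.2]
  -- indicator summability from the hypothesis
  have hsum0 : Summable (Set.indicator {n : ℕ | n.Prime ∧ Real.cos (y * Real.log n + α) < -K}
      (fun n : ℕ => 1 / (n : ℝ))) := summable_subtype_iff_indicator.mp hsum
  have hsum1 : Summable (fun p : Nat.Primes =>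
      Set.indicator {n : ℕ | n.Prime ∧ Real.cos (y * Real.log n + α) < -K}
        (fun n : ℕ => 1 / (n : ℝ)) (p : ℕ)) := hsum0.subtype _
  have hind : Summable (fun p : Nat.Primes =>
      if Real.cos (θ p) < -K then 1 / ((p : ℕ) : ℝ) else 0) := by
    apply hsum1.congr
    intro p
    rw [Set.indicator_apply]
    by_cases hb : Real.cos (θ p) < -K
    · rw [if_pos hb, if_pos]
      exact Set.mem_setOf.mpr ⟨p.prop, hb⟩
    · rw [if_neg hb, if_neg]
      intro hmem
      exact hb (Set.mem_setOf.mp hmem).2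
  set Blow : ℝ := ∑' p : Nat.Primes,
    ((1 + K) * (N : ℝ) ^ 2) * (if Real.cos (θ p) < -K then 1 / ((p : ℕ) : ℝ) else 0) with hBdef
  have hTsummable : ∀ {σ : ℝ}, 1 < σ → Summable (fun p : Nat.Primes => G p * (p : ℝ) ^ (-σ)) := by
    intro σ hσ
    apply Summable.of_norm
    apply Summable.of_nonneg_of_le (fun p => norm_nonneg _) _
      ((summable_p_rpow hσ).mul_left ((1 + K) * (N : ℝ) ^ 2))
    intro p
    rw [Real.norm_eq_abs, abs_mul, abs_of_nonneg (by positivity : (0:ℝ) ≤ (p : ℝ) ^ (-σ))]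
    exact mul_le_mul_of_nonneg_right (hGabs p) (by positivity)
  have hTlow : ∀ σ ∈ Set.Ioc (1:ℝ) 2, -Blow ≤ ∑' p : Nat.Primes, G p * (p : ℝ) ^ (-σ) := by
    intro σ hσ
    have hσ1 := hσ.1
    rw [hBdef, ← tsum_neg]
    apply Summable.tsum_le_tsum _ ((hind.mul_left _).neg) (hTsummable hσ1)
    intro p
    have hx0 : (0:ℝ) ≤ (p : ℝ) ^ (-σ) := by positivity
    by_cases hb : Real.cos (θ p) < -K
    · rw [if_pos hb]
      have hx1 : (p : ℝ) ^ (-σ) ≤ 1 / ((p : ℕ) : ℝ) := by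
        rw [one_div, ← Real.rpow_neg_one]
        exact rpow_anti p hσ1.le
      have hG1 : -((1 + K) * (N : ℝ) ^ 2) ≤ G p := by
        have := hGabs p
        have := abs_le.mp this
        linarith [this.1]
      calc -((1 + K) * (N : ℝ) ^ 2 * (1 / ((p : ℕ) : ℝ)))
          ≤ -((1 + K) * (N : ℝ) ^ 2 * ((p : ℝ) ^ (-σ))) := by
            apply neg_le_neg
            exact mul_le_mul_of_nonneg_left hx1 (by positivity)
      _ = (-((1 + K) * (N : ℝ) ^ 2)) * ((p : ℝ) ^ (-σ)) := by ring
      _ ≤ G p * (p : ℝ) ^ (-σ) := mul_le_mul_of_nonneg_right hG1 hx0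
    · rw [if_neg hb]
      push_neg at hb
      have hG0 : 0 ≤ G p := by
        rw [hGdef]
        exact mul_nonneg (by linarith) (Complex.normSq_nonneg _)
      rw [mul_zero, neg_zero]
      exact mul_nonneg hG0 hx0
  have hA : ∀ (k : ℤ) {σ : ℝ}, 1 < σ → Summable
      (fun p : Nat.Primes => Efun (θ p) k * (((p : ℝ) ^ (-σ) : ℝ) : ℂ)) :=
    fun k σ h => summable_Afun y α k h
  have hcompl : ∀ σ : ℝ, 1 < σ →
      ((∑' p : Nat.Primes, G p * (p : ℝ) ^ (-σ) : ℝ) : ℂ)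
      = ∑ j ∈ Finset.range N, ∑ m ∈ Finset.range N, (-1 : ℂ) ^ (j + m) *
          ((Afun y α ((j:ℤ) - m + 1) σ + Afun y α ((j:ℤ) - m - 1) σ) / 2
            + (K : ℂ) * Afun y α ((j:ℤ) - m) σ) := by
    intro σ hσ
    have hsummand : ∀ a b c : ℤ, Summable (fun p : Nat.Primes =>
        (Efun (θ p) a * (((p : ℝ) ^ (-σ) : ℝ) : ℂ)
          + Efun (θ p) b * (((p : ℝ) ^ (-σ) : ℝ) : ℂ)) / 2
          + (K : ℂ) * (Efun (θ p) c * (((p : ℝ) ^ (-σ) : ℝ) : ℂ))) := by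
      intro a b c
      exact (((hA a hσ).add (hA b hσ)).div_const 2).add ((hA c hσ).mul_left _)
    calc ((∑' p : Nat.Primes, G p * (p : ℝ) ^ (-σ) : ℝ) : ℂ)
        = ∑' p : Nat.Primes, ∑ j ∈ Finset.range N, ∑ m ∈ Finset.range N, (-1 : ℂ) ^ (j + m) *
            ((Efun (θ p) ((j:ℤ) - m + 1) * (((p : ℝ) ^ (-σ) : ℝ) : ℂ)
              + Efun (θ p) ((j:ℤ) - m - 1) * (((p : ℝ) ^ (-σ) : ℝ) : ℂ)) / 2
              + (K : ℂ) * (Efun (θ p) ((j:ℤ) - m) * (((p : ℝ) ^ (-σ) : ℝ) : ℂ))) := by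
          rw [Complex.ofReal_tsum]
          apply tsum_congr
          intro p
          calc ((G p * (p : ℝ) ^ (-σ) : ℝ) : ℂ)
              = (((Real.cos (θ p) + K : ℝ)) : ℂ) * (Complex.normSq (dsum N (θ p)) : ℂ)
                  * (((p : ℝ) ^ (-σ) : ℝ) : ℂ) := by
                rw [hGdef]; push_cast; ring
          _ = (∑ j ∈ Finset.range N, ∑ m ∈ Finset.range N, (-1 : ℂ) ^ (j + m) *
                ((Efun (θ p) ((j:ℤ) - m + 1) + Efun (θ p) ((j:ℤ) - m - 1)) / 2
                  + (K : ℂ) * Efun (θ p) ((j:ℤ) - m))) * (((p : ℝ) ^ (-σ) : ℝ) : ℂ) := by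
                rw [point_id N K (θ p)]
          _ = _ := by
                rw [Finset.sum_mul]
                apply Finset.sum_congr rfl
                intro j _
                rw [Finset.sum_mul]
                apply Finset.sum_congr rfl
                intro m _
                ring
    _ = _ := by
          rw [Summable.tsum_finsetSum (fun j _ => summable_sum (fun m _ => ((hsummand _ _ _).mul_left _)))]
          apply Finset.sum_congr rfl
          intro j _
          rw [Summable.tsum_finsetSum (fun m _ => ((hsummand _ _ _).mul_left _))]
          apply Finset.sum_congr rfl
          intro m _
          rw [tsum_mul_left]
          congr 1
          rw [Summable.tsum_add (((hA _ hσ).add (hA _ hσ)).div_const 2) ((hA _ hσ).mul_left _),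
            tsum_div_const, Summable.tsum_add (hA _ hσ) (hA _ hσ), tsum_mul_left]
          rfl
  have hCA : ∀ k : ℤ, ∃ C, 0 ≤ C ∧ ∀ σ ∈ Set.Ioc (1:ℝ) 2,
      ‖(if k = 0 then (0 : ℂ) else Afun y α k σ)‖ ≤ C := by
    intro k
    by_cases hk : k = 0
    · exact ⟨0, le_rfl, fun σ _ => by rw [if_pos hk]; simp⟩
    · obtain ⟨C, hC⟩ := Afun_bound hy α hk
      exact ⟨max C 0, le_max_right _ _, fun σ hσ => by
        rw [if_neg hk]; exact le_trans (hC σ hσ) (le_max_left _ _)⟩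
  choose CA hCA0 hCAb using hCA
  set CM : ℝ := ∑ k ∈ Finset.Icc (-(N:ℤ) - 1) ((N:ℤ) + 1), CA k with hCMdef
  have hCM0 : 0 ≤ CM := Finset.sum_nonneg (fun k _ => hCA0 k)
  have hCMk : ∀ k : ℤ, -(N:ℤ) - 1 ≤ k → k ≤ (N:ℤ) + 1 → CA k ≤ CM := by
    intro k h1 h2
    exact Finset.single_le_sum (fun i _ => hCA0 i) (Finset.mem_Icc.mpr ⟨h1, h2⟩)
  have hfinal : ∀ σ ∈ Set.Ioc (1:ℝ) 2,
      Rsum σ * ((N : ℝ) * (1 - K) - 1) ≤ 2 * (N:ℝ)^2 * CM + Blow := by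
    intro σ hσ
    have hσ1 := hσ.1
    set BB : ℤ → ℂ := fun k => if k = 0 then (0 : ℂ) else Afun y α k σ with hBBdef
    have hBBle : ∀ k : ℤ, -(N:ℤ) - 1 ≤ k → k ≤ (N:ℤ) + 1 → ‖BB k‖ ≤ CM :=
      fun k h1 h2 => le_trans (hCAb k σ hσ) (hCMk k h1 h2)
    have hAsplit : ∀ k : ℤ, Afun y α k σ
        = ((Rsum σ : ℝ) : ℂ) * (if k = 0 then (1:ℂ) else 0) + BB k := by
      intro k
      by_cases hk : k = 0
      · subst hk
        simp [hBBdef, Afun_zero_eq]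
      · rw [hBBdef]
        simp only [if_neg hk]
        ring
    set Er : ℂ := ∑ j ∈ Finset.range N, ∑ m ∈ Finset.range N, (-1:ℂ)^(j+m) *
        ((BB ((j:ℤ)-m+1) + BB ((j:ℤ)-m-1))/2 + (K:ℂ) * BB ((j:ℤ)-m)) with hErdef
    have hErbound : ‖Er‖ ≤ 2 * (N:ℝ)^2 * CM := by
      rw [hErdef]
      apply le_trans (norm_sum_le _ _)
      have hjb : ∀ j ∈ Finset.range N, ‖∑ m ∈ Finset.range N, (-1:ℂ)^(j+m) *
          ((BB ((j:ℤ)-m+1) + BB ((j:ℤ)-m-1))/2 + (K:ℂ) * BB ((j:ℤ)-m))‖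
          ≤ (N:ℝ) * (2 * CM) := by
        intro j hj
        apply le_trans (norm_sum_le _ _)
        have hmb : ∀ m ∈ Finset.range N, ‖(-1:ℂ)^(j+m) *
            ((BB ((j:ℤ)-m+1) + BB ((j:ℤ)-m-1))/2 + (K:ℂ) * BB ((j:ℤ)-m))‖ ≤ 2 * CM := by
          intro m hm
          have hjN := Finset.mem_range.mp hj
          have hmN := Finset.mem_range.mp hm
          rw [norm_mul, norm_pow, norm_neg, norm_one, one_pow, one_mul]
          have b1 : ‖BB ((j:ℤ)-m+1)‖ ≤ CM := hBBle _ (by omega) (by omega)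
          have b2 : ‖BB ((j:ℤ)-m-1)‖ ≤ CM := hBBle _ (by omega) (by omega)
          have b3 : ‖BB ((j:ℤ)-m)‖ ≤ CM := hBBle _ (by omega) (by omega)
          calc ‖(BB ((j:ℤ)-m+1) + BB ((j:ℤ)-m-1))/2 + (K:ℂ) * BB ((j:ℤ)-m)‖
              ≤ ‖(BB ((j:ℤ)-m+1) + BB ((j:ℤ)-m-1))/2‖ + ‖(K:ℂ) * BB ((j:ℤ)-m)‖ :=
                norm_add_le _ _
          _ ≤ (‖BB ((j:ℤ)-m+1)‖ + ‖BB ((j:ℤ)-m-1)‖)/2 + K * ‖BB ((j:ℤ)-m)‖ := by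
                apply add_le_add
                · rw [norm_div]
                  apply div_le_div_of_nonneg_right (norm_add_le _ _) ?_ |>.trans_eq ?_
                  · norm_num
                  · norm_num
                · rw [norm_mul, Complex.norm_real, Real.norm_eq_abs,
                    abs_of_nonneg hK0.le]
          _ ≤ (CM + CM)/2 + K * CM := by
                apply add_le_add
                · apply div_le_div_of_nonneg_right (add_le_add b1 b2) ?_ |>.trans_eq ?_
                  · norm_num
                  · norm_num
                · exact mul_le_mul_of_nonneg_left b3 hK0.le
          _ ≤ 2 * CM := by nlinarith
        calc ∑ m ∈ Finset.range N, ‖(-1:ℂ)^(j+m) *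
            ((BB ((j:ℤ)-m+1) + BB ((j:ℤ)-m-1))/2 + (K:ℂ) * BB ((j:ℤ)-m))‖
            ≤ ∑ m ∈ Finset.range N, (2 * CM) := Finset.sum_le_sum hmb
        _ = (N:ℝ) * (2 * CM) := by rw [Finset.sum_const, Finset.card_range]; ring
      calc ∑ j ∈ Finset.range N, ‖∑ m ∈ Finset.range N, (-1:ℂ)^(j+m) *
          ((BB ((j:ℤ)-m+1) + BB ((j:ℤ)-m-1))/2 + (K:ℂ) * BB ((j:ℤ)-m))‖
          ≤ ∑ j ∈ Finset.range N, ((N:ℝ) * (2 * CM)) := Finset.sum_le_sum hjb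
      _ = 2 * (N:ℝ)^2 * CM := by rw [Finset.sum_const, Finset.card_range]; ring
    have hWc : (∑ j ∈ Finset.range N, ∑ m ∈ Finset.range N, (-1:ℂ)^(j+m) *
        (((if (j:ℤ)-m+1 = 0 then (1:ℂ) else 0) + (if (j:ℤ)-m-1 = 0 then (1:ℂ) else 0))/2
          + (K:ℂ) * (if (j:ℤ)-m = 0 then (1:ℂ) else 0)))
        = (K:ℂ) * N - ((N - 1 : ℕ) : ℂ) := by
      have hexp : ∀ j ∈ Finset.range N, ∀ m ∈ Finset.range N,
          (-1:ℂ)^(j+m) *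
          (((if (j:ℤ)-m+1 = 0 then (1:ℂ) else 0) + (if (j:ℤ)-m-1 = 0 then (1:ℂ) else 0))/2
            + (K:ℂ) * (if (j:ℤ)-m = 0 then (1:ℂ) else 0))
          = (1/2) * ((-1:ℂ)^(j+m) * (if (j:ℤ)-m+1 = 0 then (1:ℂ) else 0))
            + (1/2) * ((-1:ℂ)^(j+m) * (if (j:ℤ)-m-1 = 0 then (1:ℂ) else 0))
            + (K:ℂ) * ((-1:ℂ)^(j+m) * (if (j:ℤ)-m = 0 then (1:ℂ) else 0)) := by
        intro j _ m _
        ring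
      rw [Finset.sum_congr rfl (fun j hj => Finset.sum_congr rfl (fun m hm => hexp j hj m hm))]
      simp only [Finset.sum_add_distrib, ← Finset.mul_sum]
      rw [count0 N, count1 N, count2 N]
      ring
    have hid := hcompl σ hσ1
    have hsplit2 : ∑ j ∈ Finset.range N, ∑ m ∈ Finset.range N, (-1 : ℂ) ^ (j + m) *
          ((Afun y α ((j:ℤ) - m + 1) σ + Afun y α ((j:ℤ) - m - 1) σ) / 2
            + (K : ℂ) * Afun y α ((j:ℤ) - m) σ)
        = ((Rsum σ : ℝ) : ℂ) * ((K:ℂ) * N - ((N - 1 : ℕ) : ℂ)) + Er := by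
      rw [← hWc, hErdef, Finset.mul_sum, ← Finset.sum_add_distrib]
      apply Finset.sum_congr rfl
      intro j _
      rw [Finset.mul_sum, ← Finset.sum_add_distrib]
      apply Finset.sum_congr rfl
      intro m _
      rw [hAsplit ((j:ℤ)-m+1), hAsplit ((j:ℤ)-m-1), hAsplit ((j:ℤ)-m)]
      ring
    have hconst : ((K:ℂ) * N - ((N - 1 : ℕ) : ℂ))
        = (((K * N - ((N:ℝ) - 1) : ℝ)) : ℂ) := by
      rw [Nat.cast_sub hN1]
      push_cast
      ring
    have hEr_eq : (((∑' p : Nat.Primes, G p * (p : ℝ) ^ (-σ))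
        - Rsum σ * (K * N - ((N:ℝ) - 1)) : ℝ) : ℂ) = Er := by
      rw [Complex.ofReal_sub, hid, hsplit2, hconst]
      push_cast
      ring
    have habs : |(∑' p : Nat.Primes, G p * (p : ℝ) ^ (-σ))
        - Rsum σ * (K * N - ((N:ℝ) - 1))| ≤ 2 * (N:ℝ)^2 * CM := by
      rw [← Real.norm_eq_abs, ← Complex.norm_real, hEr_eq]
      exact hErbound
    have hlow := hTlow σ hσ
    have habs2 := abs_le.mp habs
    nlinarith [habs2.1, habs2.2]
  obtain ⟨σ, hσmem, hσR⟩ := Rsum_unbounded ((2*(N:ℝ)^2*CM + Blow) / ((N:ℝ)*(1-K) - 1))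
  have hineq := hfinal σ hσmem
  have hpos : 0 < (N:ℝ)*(1-K) - 1 := by linarith
  rw [div_lt_iff₀ hpos] at hσR
  linarith
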